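/- Let (L, σ) be a σ-extension of a σ-field (K, σ), let a ∈ L be σ-algebraic over K, and let V be the K-vector subspace of L spanned by the elements N_i(a), i ≥ 0. Then every b ∈ L that is σ-conjugate to a over V (i.e., b = σ(x)·a·x^{−1} for some nonzero x ∈ V) is σ-algebraic over K. -/

import Mathlib

open Polynomial

variable {K : Type*} [Field K]

/-- `skewN σ i a = σ^{i-1}(a)⋯σ(a)·a`, with `skewN σ 0 a = 1`. -/
def skewN (σ : K →+* K) : ℕ → K → K
  | 0, _ => 1
  | i + 1, a => σ (skewN σ i a) * a

/-- Right evaluation of a skew polynomial `P = Σ aᵢ Tⁱ` at `a`: `P(a) = Σ aᵢ Nᵢ(a)`. -/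
noncomputable def skewEval (σ : K →+* K) (P : Polynomial K) (a : K) : K :=
  ∑ i ∈ P.support, P.coeff i * skewN σ i a

/-- Multiplication in the skew polynomial ring `K[T;σ]` (with `T·a = σ(a)·T`),
using `Polynomial K` as the carrier of coefficient sequences. -/
noncomputable def skewMul (σ : K →+* K) (P Q : Polynomial K) : Polynomial K :=
  ∑ i ∈ P.support, ∑ j ∈ Q.support,
    Polynomial.C (P.coeff i * (⇑σ)^[i] (Q.coeff j)) * Polynomial.X ^ (i + j)

/-- In a σ-extension `(L, σL)` of the σ-subfield `K`, the element `a` is σ-algebraic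
over `K`: it is a right root of some nonzero skew polynomial with coefficients in `K`. -/
def IsSkewAlgebraic {L : Type*} [Field L] (σL : L →+* L) (K : Subfield L) (a : L) : Prop :=
  ∃ P : Polynomial L, P ≠ 0 ∧ (∀ i, P.coeff i ∈ K) ∧ skewEval σL P a = 0

lemma skewN_zero' (σ : K →+* K) (a : K) : skewN σ 0 a = 1 := rfl

lemma skewN_succ (σ : K →+* K) (i : ℕ) (a : K) : skewN σ (i + 1) a = σ (skewN σ i a) * a := rfl

lemma skewN_succ' (σ : K →+* K) (i : ℕ) (a : K) :
    skewN σ (i + 1) a = (⇑σ)^[i] a * skewN σ i a := by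
  induction i with
  | zero => simp [skewN]
  | succ i ih =>
      rw [skewN_succ, ih, map_mul, mul_assoc, ← skewN_succ, ih, Function.iterate_succ_apply']

lemma skewN_iterate_comm (σ : K →+* K) (m : ℕ) (z : K) :
    σ ((⇑σ)^[m] z) = (⇑σ)^[m] (σ z) :=
  (Function.iterate_succ_apply' σ m z).symm.trans (Function.iterate_succ_apply σ m z)

lemma skewN_add (σ : K →+* K) (i j : ℕ) (a : K) :
    skewN σ (i + j) a = (⇑σ)^[i] (skewN σ j a) * skewN σ i a := by
  induction j with
  | zero => simp [skewN]
  | succ j ih =>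
      rw [← add_assoc, skewN_succ, ih, map_mul, skewN_succ, iterate_map_mul, mul_assoc,
        mul_assoc]
      congr 1
      · exact skewN_iterate_comm σ i _
      rw [← skewN_succ, skewN_succ']

lemma skewEval_eq_sum_subset (σ : K →+* K) (P : Polynomial K) (a : K) {s : Finset ℕ}
    (h : P.support ⊆ s) :
    skewEval σ P a = ∑ i ∈ s, P.coeff i * skewN σ i a := by
  refine Finset.sum_subset h fun i _ hi => ?_
  rw [Polynomial.notMem_support_iff.mp hi, zero_mul]

lemma skewEval_add (σ : K →+* K) (P Q : Polynomial K) (a : K) :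
    skewEval σ (P + Q) a = skewEval σ P a + skewEval σ Q a := by
  rw [skewEval_eq_sum_subset σ (P + Q) a (Polynomial.support_add),
    skewEval_eq_sum_subset σ P a (Finset.subset_union_left (s₂ := Q.support)),
    skewEval_eq_sum_subset σ Q a (Finset.subset_union_right (s₁ := P.support)),
    ← Finset.sum_add_distrib]
  simp [add_mul]

lemma skewEval_zero (σ : K →+* K) (a : K) : skewEval σ 0 a = 0 := by
  simp [skewEval]

lemma skewEval_finset_sum {ι : Type*} (σ : K →+* K) (s : Finset ι) (f : ι → Polynomial K)
    (a : K) : skewEval σ (∑ i ∈ s, f i) a = ∑ i ∈ s, skewEval σ (f i) a := by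
  classical
  induction s using Finset.induction_on with
  | empty => simp [skewEval_zero]
  | insert _ _ hi ih => rw [Finset.sum_insert hi, skewEval_add, ih, Finset.sum_insert hi]

lemma skewEval_C_mul_X_pow (σ : K →+* K) (c : K) (k : ℕ) (a : K) :
    skewEval σ (Polynomial.C c * Polynomial.X ^ k) a = c * skewN σ k a := by
  by_cases hc : c = 0
  · simp [skewEval, hc]
  · rw [skewEval, Polynomial.support_C_mul_X_pow k hc, Finset.sum_singleton,
      Polynomial.coeff_C_mul, Polynomial.coeff_X_pow, if_pos rfl, mul_one]

/-- If `a` is σ-algebraic over `K` and `V` is the `K`-span of the `Nᵢ(a)`, then every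
σ-conjugate `σ(x)·a·x⁻¹` of `a` over `V` is σ-algebraic over `K`. -/
theorem stmt_8 {L : Type*} [Field L] (σL : L →+* L) (K : Subfield L)
    (hK : ∀ x ∈ K, σL x ∈ K) (a : L) (ha : IsSkewAlgebraic σL K a)
    (b x : L) (hx : x ∈ Submodule.span K (Set.range fun i : ℕ => skewN σL i a))
    (hx0 : x ≠ 0) (hb : b = σL x * a * x⁻¹) :
    IsSkewAlgebraic σL K b := by
  classical
  obtain ⟨P₀, hP₀ne, hP₀K, hP₀ev⟩ := ha
  set n := P₀.natDegree with hn
  have hKiter : ∀ (i : ℕ) (y : L), y ∈ K → (⇑σL)^[i] y ∈ K := by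
    intro i
    induction i with
    | zero => intro y hy; simpa using hy
    | succ i ih =>
        intro y hy
        rw [Function.iterate_succ_apply']
        exact hK _ (ih y hy)
  set c : L := P₀.coeff n with hcdef
  have hc : c ≠ 0 := Polynomial.leadingCoeff_ne_zero.mpr hP₀ne
  have hev : ∑ i ∈ Finset.range n, P₀.coeff i * skewN σL i a + c * skewN σL n a = 0 := by
    rw [← Finset.sum_range_succ (fun i => P₀.coeff i * skewN σL i a) n,
      ← skewEval_eq_sum_subset σL P₀ a Polynomial.supp_subset_range_natDegree_succ, hP₀ev]
  set d : ℕ → L := fun i => c⁻¹ * -P₀.coeff i with hd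
  have hdK : ∀ i, d i ∈ K := fun i => K.mul_mem (K.inv_mem (hP₀K n)) (K.neg_mem (hP₀K i))
  have hNn : skewN σL n a = ∑ i ∈ Finset.range n, d i * skewN σL i a := by
    have h2 : c * skewN σL n a = ∑ i ∈ Finset.range n, -P₀.coeff i * skewN σL i a := by
      simp only [neg_mul, Finset.sum_neg_distrib]
      linear_combination hev
    calc skewN σL n a = c⁻¹ * (c * skewN σL n a) := by
          rw [← mul_assoc, inv_mul_cancel₀ hc, one_mul]
      _ = ∑ i ∈ Finset.range n, d i * skewN σL i a := by
          rw [h2, Finset.mul_sum]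
          exact Finset.sum_congr rfl fun i _ => by rw [hd, mul_assoc]
  set V' : Submodule K L :=
    Submodule.span K (Set.range fun j : Fin n => skewN σL (j : ℕ) a) with hV'
  have hmem : ∀ m, skewN σL m a ∈ V' := by
    intro m
    induction m using Nat.strong_induction_on with
    | _ m ih =>
      by_cases hm : m < n
      · exact Submodule.subset_span ⟨⟨m, hm⟩, rfl⟩
      · obtain ⟨t, rfl⟩ : ∃ t, m = t + n :=
          ⟨m - n, (Nat.sub_add_cancel (le_of_not_gt hm)).symm⟩
        rw [skewN_add, hNn, ← RingHom.coe_pow, map_sum, Finset.sum_mul]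
        refine Submodule.sum_mem _ fun i hi => ?_
        rw [map_mul, mul_assoc, RingHom.coe_pow, ← skewN_add]
        have hdK' : (⇑σL)^[t] (d i) ∈ K := hKiter t _ (hdK i)
        have hlt : t + i < t + n := by
          have := Finset.mem_range.mp hi; omega
        have := Submodule.smul_mem V' (⟨(⇑σL)^[t] (d i), hdK'⟩ : K) (ih (t + i) hlt)
        exact this
  have hxV' : x ∈ V' := by
    refine Submodule.span_le.mpr ?_ hx
    rintro _ ⟨i, rfl⟩
    exact hmem i
  have hgmem : ∀ i : ℕ, (⇑σL)^[i] x * skewN σL i a ∈ V' := by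
    intro i
    refine Submodule.span_induction (p := fun y _ => (⇑σL)^[i] y * skewN σL i a ∈ V')
      ?_ ?_ ?_ ?_ hxV'
    · rintro _ ⟨j, rfl⟩
      rw [← skewN_add]
      exact hmem _
    · simp [iterate_map_zero]
    · intro y z _ _ hy hz
      rw [iterate_map_add, add_mul]
      exact Submodule.add_mem _ hy hz
    · intro k y _ hy
      have hkK : (⇑σL)^[i] (k : L) ∈ K := hKiter i _ k.2
      have : (⇑σL)^[i] ((k : L) * y) * skewN σL i a
          = (⇑σL)^[i] (k : L) * ((⇑σL)^[i] y * skewN σL i a) := by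
        rw [iterate_map_mul, mul_assoc]
      have hres := Submodule.smul_mem V' (⟨(⇑σL)^[i] (k : L), hkK⟩ : K) hy
      have hk : k • y = (k : L) * y := rfl
      rw [hk, this]
      exact hres
  haveI : Module.Finite K V' := Module.Finite.span_of_finite _ (Set.finite_range _)
  have hrank : Module.finrank K V' ≤ n := by
    simpa [Set.finrank] using finrank_range_le_card (R := K) fun j : Fin n => skewN σL (j : ℕ) a
  set v : Fin (n + 1) → V' := fun i => ⟨(⇑σL)^[(i : ℕ)] x * skewN σL (i : ℕ) a, hgmem i⟩ with hv
  have hnli : ¬ LinearIndependent K v := by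
    intro h
    have := h.fintype_card_le_finrank
    rw [Fintype.card_fin] at this
    omega
  obtain ⟨cf, hsum, i0, hi0⟩ := Fintype.not_linearIndependent_iff.mp hnli
  have hsumL : ∑ i : Fin (n + 1), (cf i : L) * ((⇑σL)^[(i : ℕ)] x * skewN σL (i : ℕ) a) = 0 := by
    have h1 := congrArg (V'.subtype) hsum
    rw [map_sum] at h1
    simp [hv] at h1
    exact h1
  refine ⟨∑ i : Fin (n + 1), Polynomial.C (cf i : L) * Polynomial.X ^ (i : ℕ), ?_, ?_, ?_⟩
  · intro h0
    apply hi0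
    have h1 := congrArg (fun p => Polynomial.coeff p (i0 : ℕ)) h0
    simp only [Polynomial.finset_sum_coeff, Polynomial.coeff_C_mul, Polynomial.coeff_X_pow,
      Polynomial.coeff_zero, mul_ite, mul_one, mul_zero] at h1
    rw [Finset.sum_eq_single i0 (fun j _ hj => by
      rw [if_neg (fun h => hj (Fin.ext h.symm))]) (by simp)] at h1
    rw [if_pos rfl] at h1
    exact Subtype.ext h1
  · intro m
    rw [Polynomial.finset_sum_coeff]
    refine sum_mem fun i _ => ?_
    rw [Polynomial.coeff_C_mul, Polynomial.coeff_X_pow]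
    split
    · simp only [mul_one]; exact (cf i).2
    · rw [mul_zero]; exact zero_mem K
  · have hNb : ∀ i, skewN σL i b = (⇑σL)^[i] x * skewN σL i a * x⁻¹ := by
      intro i
      induction i with
      | zero => simp [skewN_zero', hx0]
      | succ i ih =>
          rw [skewN_succ, ih, hb, map_mul, map_mul]
          have hxinv : σL x⁻¹ * σL x = 1 := by
            rw [← map_mul, inv_mul_cancel₀ hx0, map_one]
          rw [skewN_succ, Function.iterate_succ_apply']
          have h1 : σL ((⇑σL)^[i] x) * σL (skewN σL i a) * σL x⁻¹ * (σL x * a * x⁻¹)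
              = σL ((⇑σL)^[i] x) * σL (skewN σL i a) * (σL x⁻¹ * σL x) * a * x⁻¹ := by ring
          rw [h1, hxinv]
          ring
    rw [skewEval_finset_sum]
    have : ∀ i : Fin (n + 1),
        skewEval σL (Polynomial.C (cf i : L) * Polynomial.X ^ (i : ℕ)) b
          = (cf i : L) * skewN σL (i : ℕ) b := fun i => skewEval_C_mul_X_pow σL _ _ b
    rw [Finset.sum_congr rfl fun i _ => this i]
    calc ∑ i : Fin (n + 1), (cf i : L) * skewN σL (i : ℕ) b
        = (∑ i : Fin (n + 1), (cf i : L) * ((⇑σL)^[(i : ℕ)] x * skewN σL (i : ℕ) a)) * x⁻¹ := by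
          rw [Finset.sum_mul]
          exact Finset.sum_congr rfl fun i _ => by rw [hNb]; ring
      _ = 0 := by rw [hsumL, zero_mul]
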